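/- For the discounted return difference: if for every t, |E_{p_t}[r] - E_{q_t}[r]| ≤ 2 r_max ε_t where ε_t = D_TV[p_t, q_t], and the ε_t satisfy ε_t ≤ ε_{t-1} + δ_t with ε_0 = 0, then |Σ_{t=0}^∞ γ^t E_{p_t}[r] - Σ_{t=0}^∞ γ^t E_{q_t}[r]| ≤ (2 r_max/(1-γ)) Σ_{t=1}^∞ γ^t δ_t, provided Σ_{t=1}^∞ γ^t δ_t < ∞. -/

import Mathlib

/-- Total-variation distance between two pmfs on a finite type. -/
noncomputable def tv {X : Type*} [Fintype X] (f g : X → ℝ) : ℝ :=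
  (1 / 2) * ∑ x, |f x - g x|

/-- If the per-step expectation gaps are bounded by `2 r_max ε_t` with
`ε_t = D_TV[p_t, q_t]`, `ε_0 = 0`, and `ε_t ≤ ε_{t-1} + δ_t`, then the
discounted returns differ by at most `(2 r_max/(1-γ)) Σ_{t≥1} γ^t δ_t`. -/
theorem stmt_15 {X : Type*} [Fintype X]
    (p q : ℕ → X → ℝ)
    (hp0 : ∀ t x, 0 ≤ p t x) (hq0 : ∀ t x, 0 ≤ q t x)
    (hp1 : ∀ t, ∑ x, p t x = 1) (hq1 : ∀ t, ∑ x, q t x = 1)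
    (r : X → ℝ) (rmax : ℝ) (hr : ∀ x, |r x| ≤ rmax)
    (γ : ℝ) (hγ : γ ∈ Set.Ioo (0 : ℝ) 1)
    (δ : ℕ → ℝ) (hδ : ∀ t, 1 ≤ t → 0 ≤ δ t)
    (hgap : ∀ t, |(∑ x, r x * p t x) - ∑ x, r x * q t x|
      ≤ 2 * rmax * tv (p t) (q t))
    (hε0 : tv (p 0) (q 0) = 0)
    (hεstep : ∀ t : ℕ, 1 ≤ t → tv (p t) (q t) ≤ tv (p (t - 1)) (q (t - 1)) + δ t)
    (hsum : Summable fun t : ℕ => γ ^ t * δ t) :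
    |(∑' t : ℕ, γ ^ t * ∑ x, r x * p t x) - ∑' t : ℕ, γ ^ t * ∑ x, r x * q t x|
      ≤ (2 * rmax / (1 - γ)) * ∑' t : ℕ, if 1 ≤ t then γ ^ t * δ t else 0 := by
  obtain ⟨hγ0, hγ1⟩ := hγ
  have hγnn : (0:ℝ) ≤ γ := le_of_lt hγ0
  rcases isEmpty_or_nonempty X with hE | hX
  · exfalso; have := hp1 0; simp [Finset.univ_eq_empty] at this
  obtain ⟨x0⟩ := hX
  have hrmax : 0 ≤ rmax := le_trans (abs_nonneg _) (hr x0)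
  -- the truncated δ sequence and its partial sums
  set fn : ℕ → ℝ := fun k => if 1 ≤ k then δ k else 0 with hfn
  have hfnnn : ∀ k, 0 ≤ fn k := by
    intro k; by_cases h : 1 ≤ k <;> simp [fn, h]
    exact hδ k h
  set S : ℕ → ℝ := fun n => ∑ k ∈ Finset.range (n+1), fn k with hS
  have hSnn : ∀ n, 0 ≤ S n := fun n => Finset.sum_nonneg fun k _ => hfnnn k
  -- ε_t ≤ S t
  have hεS : ∀ t, tv (p t) (q t) ≤ S t := by
    intro t
    induction t with
    | zero => simp [S, fn, hε0]
    | succ n ih =>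
      have h1 : tv (p (n+1)) (q (n+1)) ≤ tv (p n) (q n) + δ (n+1) := by
        simpa using hεstep (n+1) (by omega)
      have h2 : S (n+1) = S n + δ (n+1) := by
        simp [S, Finset.sum_range_succ, fn]
      linarith
  -- expectations are bounded by rmax
  have hExp : ∀ (f : ℕ → X → ℝ), (∀ t x, 0 ≤ f t x) → (∀ t, ∑ x, f t x = 1) →
      ∀ t, |∑ x, r x * f t x| ≤ rmax := by
    intro f h0 h1 t
    calc |∑ x, r x * f t x| ≤ ∑ x, |r x * f t x| := Finset.abs_sum_le_sum_abs _ _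
    _ ≤ ∑ x, rmax * f t x := by
        apply Finset.sum_le_sum; intro x _
        rw [abs_mul, abs_of_nonneg (h0 t x)]
        exact mul_le_mul_of_nonneg_right (hr x) (h0 t x)
    _ = rmax := by rw [← Finset.mul_sum, h1 t, mul_one]
  -- summability of both discounted series
  have hgeo : Summable fun t : ℕ => γ ^ t := summable_geometric_of_lt_one hγnn hγ1
  have hsumm : ∀ (f : ℕ → X → ℝ), (∀ t x, 0 ≤ f t x) → (∀ t, ∑ x, f t x = 1) →
      Summable fun t : ℕ => γ ^ t * ∑ x, r x * f t x := by
    intro f h0 h1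
    apply Summable.of_norm_bounded (hgeo.mul_left rmax)
    intro t
    rw [norm_mul, Real.norm_eq_abs, Real.norm_eq_abs, abs_pow, abs_of_nonneg hγnn]
    calc γ ^ t * |∑ x, r x * f t x| ≤ γ ^ t * rmax :=
          mul_le_mul_of_nonneg_left (hExp f h0 h1 t) (pow_nonneg hγnn t)
      _ = rmax * γ ^ t := by ring
  have hsa := hsumm p hp0 hp1
  have hsb := hsumm q hq0 hq1
  -- summability of u = truncated weighted δ
  set u : ℕ → ℝ := fun n => if 1 ≤ n then γ ^ n * δ n else 0 with hu_def
  have hu : Summable u := by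
    have h2 : Summable fun n : ℕ => if 1 ≤ n then 0 else -(γ ^ n * δ n) := by
      apply summable_of_ne_finset_zero (s := ({0} : Finset ℕ))
      intro n hn
      have : 1 ≤ n := by simp at hn; omega
      simp [this]
    refine (hsum.add h2).congr fun n => ?_
    by_cases h : 1 ≤ n <;> simp [u, h]
  have hunn : ∀ n, 0 ≤ u n := by
    intro n; by_cases h : 1 ≤ n <;> simp [u, h]
    exact mul_nonneg (pow_nonneg hγnn n) (hδ n h)
  have hnu : Summable fun n => ‖u n‖ := by
    refine hu.congr fun n => ?_
    rw [Real.norm_eq_abs, abs_of_nonneg (hunn n)]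
  have hnv : Summable fun n : ℕ => ‖γ ^ n‖ := by
    refine hgeo.congr fun n => ?_
    rw [Real.norm_eq_abs, abs_of_nonneg (pow_nonneg hγnn n)]
  -- Cauchy product identity
  have hkey : ∀ n, ∑ k ∈ Finset.range (n+1), u k * γ ^ (n - k) = γ ^ n * S n := by
    intro n
    rw [hS, Finset.mul_sum]
    apply Finset.sum_congr rfl
    intro k hk
    have hk' : k ≤ n := Nat.lt_succ_iff.mp (Finset.mem_range.mp hk)
    by_cases h : 1 ≤ k
    · simp only [u, fn, if_pos h]
      rw [show γ ^ k * δ k * γ ^ (n - k) = γ ^ k * γ ^ (n - k) * δ k by ring,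
        ← pow_add, Nat.add_sub_cancel' hk']
    · simp [u, fn, h]
  have hsc : Summable fun n => γ ^ n * S n := by
    refine ((summable_norm_sum_mul_range_of_summable_norm hnu hnv).of_norm).congr
      fun n => hkey n
  have htsum : (∑' n, u n) * (∑' n : ℕ, γ ^ n) = ∑' n, γ ^ n * S n := by
    rw [tsum_mul_tsum_eq_tsum_sum_range_of_summable_norm hnu hnv]
    exact tsum_congr hkey
  -- pointwise bound on term differences
  set a : ℕ → ℝ := fun t => γ ^ t * ∑ x, r x * p t x with ha
  set b : ℕ → ℝ := fun t => γ ^ t * ∑ x, r x * q t x with hb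
  have hbound : ∀ t, |a t - b t| ≤ 2 * rmax * (γ ^ t * S t) := by
    intro t
    have : a t - b t = γ ^ t * ((∑ x, r x * p t x) - ∑ x, r x * q t x) := by
      simp [a, b]; ring
    rw [this, abs_mul, abs_pow, abs_of_nonneg hγnn]
    calc γ ^ t * |(∑ x, r x * p t x) - ∑ x, r x * q t x|
        ≤ γ ^ t * (2 * rmax * tv (p t) (q t)) :=
          mul_le_mul_of_nonneg_left (hgap t) (pow_nonneg hγnn t)
      _ ≤ γ ^ t * (2 * rmax * S t) := by
          apply mul_le_mul_of_nonneg_left _ (pow_nonneg hγnn t)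
          exact mul_le_mul_of_nonneg_left (hεS t) (by linarith)
      _ = 2 * rmax * (γ ^ t * S t) := by ring
  have habs : Summable fun t => |a t - b t| :=
    Summable.of_nonneg_of_le (fun t => abs_nonneg _) hbound (hsc.mul_left _)
  have hab : Summable fun t => a t - b t := hsa.sub hsb
  rw [← Summable.tsum_sub hsa hsb]
  calc |∑' t, (a t - b t)| ≤ ∑' t, |a t - b t| := by
        have := norm_tsum_le_tsum_norm (f := fun t => a t - b t)
          (by simpa [Real.norm_eq_abs] using habs)
        simpa [Real.norm_eq_abs] using this
    _ ≤ ∑' t, 2 * rmax * (γ ^ t * S t) := Summable.tsum_le_tsum hbound habs (hsc.mul_left _)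
    _ = 2 * rmax * ∑' t, γ ^ t * S t := by rw [tsum_mul_left]
    _ = 2 * rmax * ((∑' n, u n) * (1 - γ)⁻¹) := by
        rw [← htsum, tsum_geometric_of_lt_one hγnn hγ1]
    _ = (2 * rmax / (1 - γ)) * ∑' t : ℕ, if 1 ≤ t then γ ^ t * δ t else 0 := by
        simp only [hu_def]; ring
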